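/- arXiv:2105.11777 — 2 statements merged into one kernel-verified Lean document; each statement's English description precedes it below -/
import Mathlib

section
/- Let Ω ⊂ ℝ² be a bounded domain, u ∈ H¹₀(Ω) the weak solution of -Δu = f with f ∈ L²(Ω) (i.e., ∫ ∇u·∇v = ∫ f v for all v ∈ H¹₀(Ω)). For any v ∈ H¹₀(Ω) and any vector field p ∈ H(div;Ω) with div p + f = 0 in L²(Ω), the hypercircle identity holds: ‖∇u - ∇v‖²_{L²(Ω)} + ‖∇u - p‖²_{L²(Ω)} = ‖∇v - p‖²_{L²(Ω)}. -/
open MeasureTheory RealInnerProductSpace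

local notation "E2" => EuclideanSpace ℝ (Fin 2)

private lemma integrable_inner_of_memL2 {α : Type*} {m : MeasurableSpace α} {μ : Measure α}
    {F G : α → EuclideanSpace ℝ (Fin 2)} (hF : MemLp F 2 μ) (hG : MemLp G 2 μ) :
    Integrable (fun x => ⟪F x, G x⟫) μ := by
  have h := L2.integrable_inner (𝕜 := ℝ) (hF.toLp F) (hG.toLp G)
  refine h.congr ?_
  filter_upwards [hF.coeFn_toLp, hG.coeFn_toLp] with x hx hy
  rw [hx, hy]

/-- Prager–Synge hypercircle identity: if u ∈ H¹₀(Ω) weakly solves -Δu = f and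
p ∈ H(div;Ω) satisfies div p + f = 0 in L²(Ω), then for any v ∈ H¹₀(Ω),
‖∇u - ∇v‖² + ‖∇u - p‖² = ‖∇v - p‖². -/
theorem prager_synge_hypercircle
    (Ω : Set E2) (hΩmeas : MeasurableSet Ω) (hΩbdd : Bornology.IsBounded Ω)
    (H10 : (E2 → ℝ) → Prop)                      -- membership in H¹₀(Ω)
    (grad : (E2 → ℝ) → E2 → E2)                  -- weak gradient operator
    (u v : E2 → ℝ) (p : E2 → E2) (f divp : E2 → ℝ)
    (hf : MemLp f 2 (volume.restrict Ω))         -- f ∈ L²(Ω)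
    (hu : H10 u) (hv : H10 v)
    (hsub : H10 (fun x => u x - v x))
    (hgradsub : ∀ x, grad (fun y => u y - v y) x = grad u x - grad v x)
    -- u is the weak solution: (∇u, ∇w) = (f, w) for all w ∈ H¹₀(Ω)
    (hweak : ∀ w, H10 w →
      ∫ x in Ω, ⟪grad u x, grad w x⟫ = ∫ x in Ω, f x * w x)
    -- p ∈ H(div;Ω) with distributional divergence divp; Green's formula
    (hGreen : ∀ w, H10 w →
      ∫ x in Ω, ⟪grad w x, p x⟫ = -∫ x in Ω, w x * divp x)
    (hdivL2 : MemLp divp 2 (volume.restrict Ω))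
    -- div p + f = 0 in L²(Ω)
    (hdivf : ∀ᵐ x ∂(volume.restrict Ω), divp x + f x = 0)
    (hgu : MemLp (grad u) 2 (volume.restrict Ω))
    (hgv : MemLp (grad v) 2 (volume.restrict Ω))
    (hp : MemLp p 2 (volume.restrict Ω)) :
    (∫ x in Ω, ‖grad u x - grad v x‖ ^ 2) + (∫ x in Ω, ‖grad u x - p x‖ ^ 2)
      = ∫ x in Ω, ‖grad v x - p x‖ ^ 2 := by
  set μ := volume.restrict Ω with hμ
  set a : E2 → E2 := fun x => grad u x - grad v x with ha
  set b : E2 → E2 := fun x => grad u x - p x with hb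
  have hA : MemLp a 2 μ := hgu.sub hgv
  have hB : MemLp b 2 μ := hgu.sub hp
  -- orthogonality: ∫ ⟪a, b⟫ = 0
  have hiag : Integrable (fun x => ⟪a x, grad u x⟫) μ := integrable_inner_of_memL2 hA hgu
  have hiap : Integrable (fun x => ⟪a x, p x⟫) μ := integrable_inner_of_memL2 hA hp
  have key1 : ∫ x in Ω, ⟪a x, grad u x⟫ = ∫ x in Ω, f x * (u x - v x) := by
    have := hweak (fun y => u y - v y) hsub
    rw [← this]
    refine integral_congr_ae (Filter.Eventually.of_forall fun x => ?_)
    simp only [hgradsub]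
    rw [real_inner_comm]
  have key2 : ∫ x in Ω, ⟪a x, p x⟫ = ∫ x in Ω, f x * (u x - v x) := by
    have hG := hGreen (fun y => u y - v y) hsub
    have h1 : ∫ x in Ω, ⟪grad (fun y => u y - v y) x, p x⟫ = ∫ x in Ω, ⟪a x, p x⟫ :=
      integral_congr_ae (Filter.Eventually.of_forall fun x => by simp only [hgradsub]; rfl)
    have h2 : ∫ x in Ω, (u x - v x) * divp x = -∫ x in Ω, f x * (u x - v x) := by
      rw [← integral_neg]
      refine integral_congr_ae ?_
      filter_upwards [hdivf] with x hx
      have : divp x = -f x := by linarith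
      rw [this]; ring
    rw [h1] at hG
    rw [hG, h2, neg_neg]
  have horth : ∫ x in Ω, ⟪a x, b x⟫ = 0 := by
    have hsplit : ∫ x in Ω, ⟪a x, b x⟫
        = (∫ x in Ω, ⟪a x, grad u x⟫) - ∫ x in Ω, ⟪a x, p x⟫ := by
      rw [← integral_sub hiag hiap]
      refine integral_congr_ae (Filter.Eventually.of_forall fun x => ?_)
      simp [hb, inner_sub_right]
    rw [hsplit, key1, key2, sub_self]
  -- pointwise expansion
  have hpt : ∀ x, ‖grad v x - p x‖ ^ 2 = ‖a x‖ ^ 2 + ‖b x‖ ^ 2 - 2 * ⟪a x, b x⟫ := by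
    intro x
    have hvp : grad v x - p x = b x - a x := by
      show grad v x - p x = (grad u x - p x) - (grad u x - grad v x); abel
    rw [hvp, norm_sub_sq_real, real_inner_comm]
    ring
  have hiaa : Integrable (fun x => ‖a x‖ ^ 2) μ := hA.norm.integrable_sq
  have hibb : Integrable (fun x => ‖b x‖ ^ 2) μ := hB.norm.integrable_sq
  have hiab : Integrable (fun x => ⟪a x, b x⟫) μ := integrable_inner_of_memL2 hA hB
  have hsum : Integrable (fun x => ‖a x‖ ^ 2 + ‖b x‖ ^ 2) μ := hiaa.add hibb
  have h2ab : Integrable (fun x => 2 * ⟪a x, b x⟫) μ := hiab.const_mul 2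
  calc (∫ x in Ω, ‖grad u x - grad v x‖ ^ 2) + ∫ x in Ω, ‖grad u x - p x‖ ^ 2
      = (∫ x in Ω, ‖a x‖ ^ 2) + (∫ x in Ω, ‖b x‖ ^ 2) - 2 * ∫ x in Ω, ⟪a x, b x⟫ := by
        rw [horth]; ring
    _ = ∫ x in Ω, (‖a x‖ ^ 2 + ‖b x‖ ^ 2 - 2 * ⟪a x, b x⟫) := by
        rw [integral_sub hsum h2ab, integral_add hiaa hibb, integral_const_mul]
    _ = ∫ x in Ω, ‖grad v x - p x‖ ^ 2 :=
        integral_congr_ae (Filter.Eventually.of_forall fun x => (hpt x).symm)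
end

section
/- Under the hypotheses of the Prager–Synge theorem (u ∈ H¹₀(Ω) solves -Δu = f weakly, v ∈ H¹₀(Ω), p ∈ H(div;Ω) with div p + f = 0), the cross term vanishes: ∫_Ω (∇u - ∇v)·(∇u - p) dx = 0. -/
open MeasureTheory RealInnerProductSpace

local notation "E2" => EuclideanSpace ℝ (Fin 2)

private lemma integrable_inner_of_memL2_s1 {α : Type*} [MeasurableSpace α] {μ : Measure α}
    {E : Type*} [NormedAddCommGroup E] [InnerProductSpace ℝ E]
    {f g : α → E} (hf : MemLp f 2 μ) (hg : MemLp g 2 μ) :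
    Integrable (fun x => ⟪f x, g x⟫) μ := by
  have h := MeasureTheory.L2.integrable_inner (𝕜 := ℝ) (hf.toLp f) (hg.toLp g)
  refine h.congr ?_
  filter_upwards [hf.coeFn_toLp, hg.coeFn_toLp] with x h1 h2
  rw [h1, h2]

/-- Under the Prager–Synge hypotheses, the cross term vanishes:
∫_Ω (∇u - ∇v)·(∇u - p) dx = 0. -/
theorem prager_synge_cross_term
    (Ω : Set E2) (hΩmeas : MeasurableSet Ω) (hΩbdd : Bornology.IsBounded Ω)
    (H10 : (E2 → ℝ) → Prop)
    (grad : (E2 → ℝ) → E2 → E2)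
    (u v : E2 → ℝ) (p : E2 → E2) (f divp : E2 → ℝ)
    (hf : MemLp f 2 (volume.restrict Ω))
    (hu : H10 u) (hv : H10 v)
    (hsub : H10 (fun x => u x - v x))
    (hgradsub : ∀ x, grad (fun y => u y - v y) x = grad u x - grad v x)
    (hweak : ∀ w, H10 w →
      ∫ x in Ω, ⟪grad u x, grad w x⟫ = ∫ x in Ω, f x * w x)
    (hGreen : ∀ w, H10 w →
      ∫ x in Ω, ⟪grad w x, p x⟫ = -∫ x in Ω, w x * divp x)
    (hdivL2 : MemLp divp 2 (volume.restrict Ω))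
    (hdivf : ∀ᵐ x ∂(volume.restrict Ω), divp x + f x = 0)
    (hgu : MemLp (grad u) 2 (volume.restrict Ω))
    (hgv : MemLp (grad v) 2 (volume.restrict Ω))
    (hp : MemLp p 2 (volume.restrict Ω)) :
    ∫ x in Ω, ⟪grad u x - grad v x, grad u x - p x⟫ = 0 := by
  set w : E2 → ℝ := fun x => u x - v x with hw
  have hgw : MemLp (grad w) 2 (volume.restrict Ω) := by
    refine (memLp_congr_ae (Filter.Eventually.of_forall fun x => (hgradsub x))).mpr ?_
    exact hgu.sub hgv
  have h1 : Integrable (fun x => ⟪grad u x, grad w x⟫) (volume.restrict Ω) :=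
    integrable_inner_of_memL2_s1 hgu hgw
  have h2 : Integrable (fun x => ⟪grad w x, p x⟫) (volume.restrict Ω) :=
    integrable_inner_of_memL2_s1 hgw hp
  have key : ∫ x in Ω, ⟪grad u x - grad v x, grad u x - p x⟫
      = (∫ x in Ω, ⟪grad u x, grad w x⟫) - ∫ x in Ω, ⟪grad w x, p x⟫ := by
    rw [← integral_sub h1 h2]
    refine integral_congr_ae (Filter.Eventually.of_forall fun x => ?_)
    simp only [hgradsub x, inner_sub_left, inner_sub_right, real_inner_comm]
  rw [key, hweak w hsub, hGreen w hsub]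
  have : ∫ x in Ω, w x * divp x = -∫ x in Ω, f x * w x := by
    rw [← integral_neg]
    refine integral_congr_ae ?_
    filter_upwards [hdivf] with x hx
    have : divp x = -f x := by linarith
    rw [this]; ring
  rw [this]; ring
end
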